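/- arXiv:2505.09959 — 4 statements merged into one kernel-verified Lean document; each statement's English description precedes it below -/
import Mathlib

section
/- The RAG operator T is a contraction mapping with respect to the L∞ (sup) norm with Lipschitz constant γ: for all bounded functions D, D' : S × S → ℝ, ‖T D − T D'‖_∞ ≤ γ·‖D − D'‖_∞; in particular, for all states s_i, s_j, |(T D)(s_i,s_j) − (T D')(s_i,s_j)| ≤ γ·‖D − D'‖_∞. -/
open Finset

/-- The RAG operator: `(T D)(s_i, s_j) = c(s_i, s_j) + γ · Σ_{a_i} Σ_{a_j}
π(a_i|s_i)·π(a_j|s_j)·D(g(s_i,a_i), g(s_j,a_j))`, where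
`c(s_i, s_j) = |Σ_a π(a|s_i)·r(s_i,a) − Σ_a π(a|s_j)·r(s_j,a)|`. -/
noncomputable def ragT {S A : Type*} [Fintype A] (γ : ℝ) (pol : S → A → ℝ)
    (r : S → A → ℝ) (g : S → A → S) (D : S × S → ℝ) : S × S → ℝ :=
  fun p =>
    |(∑ a, pol p.1 a * r p.1 a) - (∑ a, pol p.2 a * r p.2 a)| +
      γ * ∑ ai, ∑ aj, pol p.1 ai * pol p.2 aj * D (g p.1 ai, g p.2 aj)

/-- The RAG operator is a γ-contraction in the sup norm:
`‖T D − T D'‖_∞ ≤ γ·‖D − D'‖_∞`, and pointwise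
`|(T D)(s_i,s_j) − (T D')(s_i,s_j)| ≤ γ·‖D − D'‖_∞`. -/
theorem ragT_contraction {S A : Type*} [Nonempty S] [Fintype A] [Nonempty A]
    (γ : ℝ) (hγ0 : 0 ≤ γ) (hγ1 : γ < 1)
    (pol : S → A → ℝ) (hpol0 : ∀ s a, 0 ≤ pol s a) (hpol1 : ∀ s, ∑ a, pol s a = 1)
    (r : S → A → ℝ) (hr : BddAbove (Set.range fun q : S × A => |r q.1 q.2|))
    (g : S → A → S)
    (D D' : S × S → ℝ)
    (hD : BddAbove (Set.range fun p : S × S => |D p|))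
    (hD' : BddAbove (Set.range fun p : S × S => |D' p|)) :
    (⨆ p : S × S, |ragT γ pol r g D p - ragT γ pol r g D' p|) ≤
        γ * (⨆ p : S × S, |D p - D' p|) ∧
      ∀ si sj : S, |ragT γ pol r g D (si, sj) - ragT γ pol r g D' (si, sj)| ≤
        γ * (⨆ p : S × S, |D p - D' p|) := by
  set M := ⨆ p : S × S, |D p - D' p| with hM
  -- boundedness of the difference
  obtain ⟨B1, hB1⟩ := hD
  obtain ⟨B2, hB2⟩ := hD'
  have hbdd : BddAbove (Set.range fun p : S × S => |D p - D' p|) := by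
    refine ⟨B1 + B2, ?_⟩
    rintro x ⟨p, rfl⟩
    calc |D p - D' p| ≤ |D p| + |D' p| := abs_sub _ _
      _ ≤ B1 + B2 := add_le_add (hB1 ⟨p, rfl⟩) (hB2 ⟨p, rfl⟩)
  have hle : ∀ p : S × S, |D p - D' p| ≤ M := fun p =>
    le_ciSup hbdd p
  have key : ∀ p : S × S,
      |ragT γ pol r g D p - ragT γ pol r g D' p| ≤ γ * M := by
    intro p
    have hdiff : ragT γ pol r g D p - ragT γ pol r g D' p =
        γ * ∑ ai, ∑ aj, pol p.1 ai * pol p.2 aj *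
          (D (g p.1 ai, g p.2 aj) - D' (g p.1 ai, g p.2 aj)) := by
      simp only [ragT, mul_sub, Finset.sum_sub_distrib, mul_sub]
      ring
    rw [hdiff, abs_mul, abs_of_nonneg hγ0]
    have hsum : |∑ ai, ∑ aj, pol p.1 ai * pol p.2 aj *
        (D (g p.1 ai, g p.2 aj) - D' (g p.1 ai, g p.2 aj))| ≤ M := by
      calc |∑ ai, ∑ aj, pol p.1 ai * pol p.2 aj *
            (D (g p.1 ai, g p.2 aj) - D' (g p.1 ai, g p.2 aj))|
          ≤ ∑ ai, ∑ aj, |pol p.1 ai * pol p.2 aj *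
            (D (g p.1 ai, g p.2 aj) - D' (g p.1 ai, g p.2 aj))| := by
            refine (Finset.abs_sum_le_sum_abs _ _).trans ?_
            exact Finset.sum_le_sum fun i _ => Finset.abs_sum_le_sum_abs _ _
        _ ≤ ∑ ai, ∑ aj, pol p.1 ai * pol p.2 aj * M := by
            refine Finset.sum_le_sum fun i _ => Finset.sum_le_sum fun j _ => ?_
            rw [abs_mul, abs_of_nonneg (mul_nonneg (hpol0 _ _) (hpol0 _ _))]
            exact mul_le_mul_of_nonneg_left (hle _)
              (mul_nonneg (hpol0 _ _) (hpol0 _ _))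
        _ = M := by
            simp only [← Finset.sum_mul, ← Finset.mul_sum, hpol1]
            simp [hpol1]
    exact mul_le_mul_of_nonneg_left hsum hγ0
  exact ⟨ciSup_le fun p => key p, fun si sj => key (si, sj)⟩
end

section
/- The RAG operator T has a unique fixed point D^π in the space of bounded functions S × S → ℝ: there exists a bounded function D^π with T D^π = D^π, and any two bounded functions D, D' satisfying T D = D and T D' = D' are equal. -/
open Finset BoundedContinuousFunction

/-- Weighted double sum bound. -/
lemma ragT_sum_bound {S A : Type*} [Fintype A] (pol : S → A → ℝ)
    (hpol0 : ∀ s a, 0 ≤ pol s a) (hpol1 : ∀ s, ∑ a, pol s a = 1)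
    (s1 s2 : S) (f : A → A → ℝ) (C : ℝ) (hf : ∀ ai aj, |f ai aj| ≤ C) :
    |∑ ai, ∑ aj, pol s1 ai * pol s2 aj * f ai aj| ≤ C := by
  calc |∑ ai, ∑ aj, pol s1 ai * pol s2 aj * f ai aj|
      ≤ ∑ ai, |∑ aj, pol s1 ai * pol s2 aj * f ai aj| :=
        Finset.abs_sum_le_sum_abs _ _
    _ ≤ ∑ ai, ∑ aj, |pol s1 ai * pol s2 aj * f ai aj| :=
        Finset.sum_le_sum fun ai _ => Finset.abs_sum_le_sum_abs _ _
    _ ≤ ∑ ai, ∑ aj, pol s1 ai * pol s2 aj * C := by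
        apply Finset.sum_le_sum; intro ai _
        apply Finset.sum_le_sum; intro aj _
        rw [abs_mul, abs_mul, abs_of_nonneg (hpol0 s1 ai), abs_of_nonneg (hpol0 s2 aj)]
        exact mul_le_mul_of_nonneg_left (hf ai aj)
          (mul_nonneg (hpol0 s1 ai) (hpol0 s2 aj))
    _ = C := by
        simp only [mul_assoc, ← Finset.mul_sum, ← Finset.sum_mul, hpol1, one_mul]

/-- The RAG operator has a unique fixed point in the space of bounded functions
`S × S → ℝ`: a bounded fixed point exists, and any two bounded fixed points
are equal. -/
theorem ragT_exists_unique_fixedPoint {S A : Type*} [Nonempty S] [Fintype A] [Nonempty A]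
    (γ : ℝ) (hγ0 : 0 ≤ γ) (hγ1 : γ < 1)
    (pol : S → A → ℝ) (hpol0 : ∀ s a, 0 ≤ pol s a) (hpol1 : ∀ s, ∑ a, pol s a = 1)
    (r : S → A → ℝ) (hr : BddAbove (Set.range fun q : S × A => |r q.1 q.2|))
    (g : S → A → S) :
    (∃ Dpi : S × S → ℝ, BddAbove (Set.range fun p : S × S => |Dpi p|) ∧
        ragT γ pol r g Dpi = Dpi) ∧
      ∀ D D' : S × S → ℝ,
        BddAbove (Set.range fun p : S × S => |D p|) →
        BddAbove (Set.range fun p : S × S => |D' p|) →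
        ragT γ pol r g D = D → ragT γ pol r g D' = D' → D = D' := by
  letI : TopologicalSpace S := ⊥
  haveI : DiscreteTopology S := ⟨rfl⟩
  obtain ⟨M, hM⟩ := hr
  have hMr : ∀ s a, |r s a| ≤ M := fun s a => hM ⟨(s, a), rfl⟩
  have hrew : ∀ s : S, |∑ a, pol s a * r s a| ≤ M := by
    intro s
    calc |∑ a, pol s a * r s a| ≤ ∑ a, |pol s a * r s a| := Finset.abs_sum_le_sum_abs _ _
      _ ≤ ∑ a, pol s a * M := by
          apply Finset.sum_le_sum; intro a _
          rw [abs_mul, abs_of_nonneg (hpol0 s a)]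
          exact mul_le_mul_of_nonneg_left (hMr s a) (hpol0 s a)
      _ = M := by rw [← Finset.sum_mul, hpol1, one_mul]
  -- the cost term is bounded by 2M
  have hc : ∀ p : S × S,
      |(∑ a, pol p.1 a * r p.1 a) - (∑ a, pol p.2 a * r p.2 a)| ≤ 2 * M := by
    intro p
    calc |(∑ a, pol p.1 a * r p.1 a) - (∑ a, pol p.2 a * r p.2 a)|
        ≤ |∑ a, pol p.1 a * r p.1 a| + |∑ a, pol p.2 a * r p.2 a| := abs_sub _ _
      _ ≤ 2 * M := by linarith [hrew p.1, hrew p.2]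
  -- lift ragT to bounded continuous functions
  have bnd : ∀ (D : S × S →ᵇ ℝ) (p : S × S),
      ‖ragT γ pol r g D p‖ ≤ 2 * M + γ * ‖D‖ := by
    intro D p
    have h1 := hc p
    have h2 : |∑ ai, ∑ aj, pol p.1 ai * pol p.2 aj * D (g p.1 ai, g p.2 aj)| ≤ ‖D‖ :=
      ragT_sum_bound pol hpol0 hpol1 p.1 p.2 _ ‖D‖
        (fun ai aj => D.norm_coe_le_norm (g p.1 ai, g p.2 aj))
    have : ‖ragT γ pol r g D p‖ ≤
        |(∑ a, pol p.1 a * r p.1 a) - (∑ a, pol p.2 a * r p.2 a)| +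
        γ * |∑ ai, ∑ aj, pol p.1 ai * pol p.2 aj * D (g p.1 ai, g p.2 aj)| := by
      rw [ragT]
      calc ‖_ + _‖ ≤ ‖(|(∑ a, pol p.1 a * r p.1 a) - (∑ a, pol p.2 a * r p.2 a)|)‖ +
            ‖γ * ∑ ai, ∑ aj, pol p.1 ai * pol p.2 aj * D (g p.1 ai, g p.2 aj)‖ :=
              norm_add_le _ _
        _ = _ := by
            rw [Real.norm_eq_abs, Real.norm_eq_abs, abs_abs, abs_mul, abs_of_nonneg hγ0]
    refine this.trans ?_
    have := mul_le_mul_of_nonneg_left h2 hγ0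
    linarith
  let F : (S × S →ᵇ ℝ) → (S × S →ᵇ ℝ) := fun D =>
    BoundedContinuousFunction.ofNormedAddCommGroup (ragT γ pol r g D)
      continuous_of_discreteTopology (2 * M + γ * ‖D‖) (bnd D)
  have hFcoe : ∀ D : S × S →ᵇ ℝ, ⇑(F D) = ragT γ pol r g ⇑D := fun D => rfl
  -- contraction
  have hdiff : ∀ (D D' : S × S →ᵇ ℝ) (p : S × S),
      ragT γ pol r g D p - ragT γ pol r g D' p =
        γ * ∑ ai, ∑ aj, pol p.1 ai * pol p.2 aj *
          (D (g p.1 ai, g p.2 aj) - D' (g p.1 ai, g p.2 aj)) := by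
    intro D D' p
    simp only [ragT, mul_sub, Finset.sum_sub_distrib]
    ring
  have hlip : LipschitzWith ⟨γ, hγ0⟩ F := by
    apply LipschitzWith.of_dist_le_mul
    intro D D'
    rw [BoundedContinuousFunction.dist_le (by positivity)]
    intro p
    rw [Real.dist_eq, hFcoe, hFcoe, hdiff D D' p, abs_mul, abs_of_nonneg hγ0]
    change _ ≤ γ * dist D D'
    apply mul_le_mul_of_nonneg_left _ hγ0
    exact ragT_sum_bound pol hpol0 hpol1 p.1 p.2 _ (dist D D')
      (fun ai aj => by rw [← Real.dist_eq]; exact BoundedContinuousFunction.dist_coe_le_dist _)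
  have hcontr : ContractingWith ⟨γ, hγ0⟩ F := ⟨by exact_mod_cast hγ1, hlip⟩
  have hfix := hcontr.fixedPoint_isFixedPt
  constructor
  · refine ⟨⇑(ContractingWith.fixedPoint F hcontr), ?_, ?_⟩
    · exact ⟨‖ContractingWith.fixedPoint F hcontr‖,
        by rintro x ⟨p, rfl⟩; exact (ContractingWith.fixedPoint F hcontr).norm_coe_le_norm p⟩
    · have := congrArg (fun f : S × S →ᵇ ℝ => ⇑f) hfix
      simpa [hFcoe] using this
  · intro D D' hD hD' hfD hfD'
    obtain ⟨MD, hMD⟩ := hD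
    obtain ⟨MD', hMD'⟩ := hD'
    let Db : S × S →ᵇ ℝ := BoundedContinuousFunction.ofNormedAddCommGroup D
      continuous_of_discreteTopology MD (fun p => hMD ⟨p, rfl⟩)
    let Db' : S × S →ᵇ ℝ := BoundedContinuousFunction.ofNormedAddCommGroup D'
      continuous_of_discreteTopology MD' (fun p => hMD' ⟨p, rfl⟩)
    have h1 : F Db = Db := by
      apply BoundedContinuousFunction.ext
      intro p
      have : ⇑(F Db) = ragT γ pol r g D := hFcoe Db
      rw [this, hfD]; rfl
    have h2 : F Db' = Db' := by
      apply BoundedContinuousFunction.ext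
      intro p
      have : ⇑(F Db') = ragT γ pol r g D' := hFcoe Db'
      rw [this, hfD']; rfl
    have hd := hlip.dist_le_mul Db Db'
    rw [h1, h2] at hd
    change dist Db Db' ≤ γ * dist Db Db' at hd
    have hdd : dist Db Db' = 0 := by nlinarith [dist_nonneg (x := Db) (y := Db')]
    have : Db = Db' := by rwa [dist_eq_zero] at hdd
    exact congrArg (fun f : S × S →ᵇ ℝ => ⇑f) this
end

section
/- Picard iteration of the RAG operator converges geometrically to its fixed point: if D^π is the bounded fixed point of T and D₀ : S × S → ℝ is any bounded function, then for every n ≥ 0, ‖Tⁿ D₀ − D^π‖_∞ ≤ γⁿ·‖D₀ − D^π‖_∞; consequently the iterates Tⁿ D₀ converge uniformly to D^π as n → ∞. -/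
open Finset Filter

lemma ragT_step {S A : Type*} [Fintype A]
    (γ : ℝ) (hγ0 : 0 ≤ γ)
    (pol : S → A → ℝ) (hpol0 : ∀ s a, 0 ≤ pol s a) (hpol1 : ∀ s, ∑ a, pol s a = 1)
    (r : S → A → ℝ) (g : S → A → S) (Dpi : S × S → ℝ)
    (hfix : ragT γ pol r g Dpi = Dpi)
    (B : ℝ) (D : S × S → ℝ) (hD : ∀ p, |D p - Dpi p| ≤ B) :
    ∀ p, |ragT γ pol r g D p - Dpi p| ≤ γ * B := by
  intro p
  conv_lhs => rw [← hfix]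
  have h1 : ragT γ pol r g D p - ragT γ pol r g Dpi p =
      γ * ∑ ai, ∑ aj, pol p.1 ai * pol p.2 aj *
        (D (g p.1 ai, g p.2 aj) - Dpi (g p.1 ai, g p.2 aj)) := by
    simp only [ragT, mul_sub, Finset.sum_sub_distrib]
    ring
  rw [h1, abs_mul, abs_of_nonneg hγ0]
  apply mul_le_mul_of_nonneg_left _ hγ0
  calc |∑ ai, ∑ aj, pol p.1 ai * pol p.2 aj *
        (D (g p.1 ai, g p.2 aj) - Dpi (g p.1 ai, g p.2 aj))|
      ≤ ∑ ai, ∑ aj, |pol p.1 ai * pol p.2 aj *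
        (D (g p.1 ai, g p.2 aj) - Dpi (g p.1 ai, g p.2 aj))| := by
        refine (Finset.abs_sum_le_sum_abs _ _).trans ?_
        exact Finset.sum_le_sum fun i _ => Finset.abs_sum_le_sum_abs _ _
    _ ≤ ∑ ai, ∑ aj, pol p.1 ai * pol p.2 aj * B := by
        refine Finset.sum_le_sum fun i _ => Finset.sum_le_sum fun j _ => ?_
        rw [abs_mul, abs_of_nonneg (mul_nonneg (hpol0 _ _) (hpol0 _ _))]
        exact mul_le_mul_of_nonneg_left (hD _)
          (mul_nonneg (hpol0 _ _) (hpol0 _ _))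
    _ = B := by
        simp only [mul_assoc, ← Finset.mul_sum, ← Finset.sum_mul, hpol1]
        ring

/-- Picard iteration of the RAG operator converges geometrically to its bounded
fixed point: `‖Tⁿ D₀ − D^π‖_∞ ≤ γⁿ·‖D₀ − D^π‖_∞` for every `n`, and the
iterates converge uniformly to `D^π`. -/
theorem ragT_picard_iteration {S A : Type*} [Nonempty S] [Fintype A] [Nonempty A]
    (γ : ℝ) (hγ0 : 0 ≤ γ) (hγ1 : γ < 1)
    (pol : S → A → ℝ) (hpol0 : ∀ s a, 0 ≤ pol s a) (hpol1 : ∀ s, ∑ a, pol s a = 1)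
    (r : S → A → ℝ) (hr : BddAbove (Set.range fun q : S × A => |r q.1 q.2|))
    (g : S → A → S)
    (Dpi : S × S → ℝ) (hDpi : BddAbove (Set.range fun p : S × S => |Dpi p|))
    (hfix : ragT γ pol r g Dpi = Dpi)
    (D₀ : S × S → ℝ) (hD₀ : BddAbove (Set.range fun p : S × S => |D₀ p|)) :
    (∀ n : ℕ, (⨆ p : S × S, |(ragT γ pol r g)^[n] D₀ p - Dpi p|) ≤
        γ ^ n * ⨆ p : S × S, |D₀ p - Dpi p|) ∧
      TendstoUniformly (fun n : ℕ => (ragT γ pol r g)^[n] D₀) Dpi atTop := by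
  obtain ⟨C₀, hC₀⟩ := hD₀
  obtain ⟨C₁, hC₁⟩ := hDpi
  simp only [mem_upperBounds, Set.mem_range, forall_exists_index] at hC₀ hC₁
  have hbdd : BddAbove (Set.range fun p : S × S => |D₀ p - Dpi p|) := by
    refine ⟨C₀ + C₁, ?_⟩
    rintro x ⟨p, rfl⟩
    exact (abs_sub _ _).trans (add_le_add (hC₀ _ p rfl) (hC₁ _ p rfl))
  set M := ⨆ p : S × S, |D₀ p - Dpi p| with hM
  have hle : ∀ p, |D₀ p - Dpi p| ≤ M := fun p => le_ciSup hbdd p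
  have key : ∀ n, ∀ p, |(ragT γ pol r g)^[n] D₀ p - Dpi p| ≤ γ ^ n * M := by
    intro n
    induction n with
    | zero => simpa using hle
    | succ n ih =>
      intro p
      rw [Function.iterate_succ_apply']
      have := ragT_step γ hγ0 pol hpol0 hpol1 r g Dpi hfix (γ ^ n * M)
        ((ragT γ pol r g)^[n] D₀) ih p
      calc _ ≤ γ * (γ ^ n * M) := this
        _ = γ ^ (n + 1) * M := by ring
  constructor
  · exact fun n => ciSup_le (key n)
  · have hM0 : 0 ≤ M := le_trans (abs_nonneg _) (hle Classical.ofNonempty)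
    rw [Metric.tendstoUniformly_iff]
    intro ε hε
    have htend : Tendsto (fun n : ℕ => γ ^ n * M) atTop (nhds 0) := by
      simpa using (tendsto_pow_atTop_nhds_zero_of_lt_one hγ0 hγ1).mul_const M
    filter_upwards [htend.eventually (gt_mem_nhds hε)] with n hn p
    rw [Real.dist_eq, abs_sub_comm]
    exact lt_of_le_of_lt (key n p) hn
end

section
/- Value function difference bound: let V : S → ℝ be a bounded function satisfying the Bellman equation V(s) = Σ_a π(a|s)·(r(s,a) + γ·V(g(s,a))) for all s, and let D^π be the bounded fixed point of the RAG operator T. Then for all states s_i, s_j, |V(s_i) − V(s_j)| ≤ D^π(s_i, s_j). -/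
open Finset

/-- Value function difference bound: if `V` is a bounded solution of the
expected-state Bellman equation and `D^π` is the bounded fixed point of the RAG
operator, then `|V(s_i) − V(s_j)| ≤ D^π(s_i, s_j)` for all states. -/
theorem value_diff_le_ragT_fixedPoint {S A : Type*} [Nonempty S] [Fintype A] [Nonempty A]
    (γ : ℝ) (hγ0 : 0 ≤ γ) (hγ1 : γ < 1)
    (pol : S → A → ℝ) (hpol0 : ∀ s a, 0 ≤ pol s a) (hpol1 : ∀ s, ∑ a, pol s a = 1)
    (r : S → A → ℝ) (hr : BddAbove (Set.range fun q : S × A => |r q.1 q.2|))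
    (g : S → A → S)
    (V : S → ℝ) (hV : BddAbove (Set.range fun s : S => |V s|))
    (hBellman : ∀ s : S, V s = ∑ a, pol s a * (r s a + γ * V (g s a)))
    (Dpi : S × S → ℝ) (hDpi : BddAbove (Set.range fun p : S × S => |Dpi p|))
    (hfix : ragT γ pol r g Dpi = Dpi) :
    ∀ si sj : S, |V si - V sj| ≤ Dpi (si, sj) := by
  obtain ⟨CV, hCV⟩ := hV
  obtain ⟨CD, hCD⟩ := hDpi
  have hCV' : ∀ s, |V s| ≤ CV := fun s => hCV (Set.mem_range_self s)
  have hCD' : ∀ p, |Dpi p| ≤ CD := fun p => hCD (Set.mem_range_self p)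
  set f : S × S → ℝ := fun p => |V p.1 - V p.2| - Dpi p with hf
  have hfbdd : BddAbove (Set.range f) := by
    refine ⟨CV + CV + CD, ?_⟩
    rintro x ⟨p, rfl⟩
    have h1 : |V p.1 - V p.2| ≤ |V p.1| + |V p.2| := abs_sub _ _
    have h2 : -Dpi p ≤ |Dpi p| := neg_le_abs _
    have := hCV' p.1; have := hCV' p.2; have := hCD' p
    simp only [hf]
    linarith
  have hfne : (Set.range f).Nonempty := Set.range_nonempty _
  set M : ℝ := sSup (Set.range f) with hM
  have hs : ∀ s, V s = (∑ a, pol s a * r s a) + γ * ∑ a, pol s a * V (g s a) := by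
    intro s
    rw [hBellman s]
    simp only [mul_add]
    rw [Finset.sum_add_distrib, Finset.mul_sum]
    congr 1
    exact Finset.sum_congr rfl fun a _ => by ring
  have key : ∀ si sj : S, V si - V sj =
      ((∑ a, pol si a * r si a) - ∑ a, pol sj a * r sj a) +
        γ * ∑ ai, ∑ aj, pol si ai * pol sj aj * (V (g si ai) - V (g sj aj)) := by
    intro si sj
    have hA : ∑ ai, ∑ aj, pol si ai * pol sj aj * V (g si ai)
        = ∑ ai, pol si ai * V (g si ai) := by
      refine Finset.sum_congr rfl fun ai _ => ?_
      have : ∑ aj, pol si ai * pol sj aj * V (g si ai)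
          = (pol si ai * V (g si ai)) * ∑ aj, pol sj aj := by
        rw [Finset.mul_sum]; exact Finset.sum_congr rfl fun aj _ => by ring
      rw [this, hpol1 sj, mul_one]
    have hB : ∑ ai, ∑ aj, pol si ai * pol sj aj * V (g sj aj)
        = ∑ aj, pol sj aj * V (g sj aj) := by
      rw [Finset.sum_comm]
      refine Finset.sum_congr rfl fun aj _ => ?_
      have : ∑ ai, pol si ai * pol sj aj * V (g sj aj)
          = (pol sj aj * V (g sj aj)) * ∑ ai, pol si ai := by
        rw [Finset.mul_sum]; exact Finset.sum_congr rfl fun ai _ => by ring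
      rw [this, hpol1 si, mul_one]
    have e1 : ∑ ai, ∑ aj, pol si ai * pol sj aj * (V (g si ai) - V (g sj aj))
        = (∑ ai, pol si ai * V (g si ai)) - (∑ aj, pol sj aj * V (g sj aj)) := by
      simp only [mul_sub, Finset.sum_sub_distrib]
      rw [hA, hB]
    rw [e1, hs si, hs sj]
    ring
  have hle : ∀ p : S × S, f p ≤ γ * M := by
    rintro ⟨si, sj⟩
    have hD : Dpi (si, sj) =
        |(∑ a, pol si a * r si a) - ∑ a, pol sj a * r sj a| +
          γ * ∑ ai, ∑ aj, pol si ai * pol sj aj * Dpi (g si ai, g sj aj) := by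
      conv_lhs => rw [← hfix]
      rfl
    have habs : |V si - V sj| ≤
        |(∑ a, pol si a * r si a) - ∑ a, pol sj a * r sj a| +
          γ * ∑ ai, ∑ aj, pol si ai * pol sj aj * |V (g si ai) - V (g sj aj)| := by
      rw [key si sj]
      refine (abs_add_le _ _).trans ?_
      gcongr
      rw [abs_mul, abs_of_nonneg hγ0]
      gcongr
      refine (Finset.abs_sum_le_sum_abs _ _).trans ?_
      refine Finset.sum_le_sum fun ai _ => ?_
      refine (Finset.abs_sum_le_sum_abs _ _).trans ?_
      refine Finset.sum_le_sum fun aj _ => ?_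
      rw [abs_mul, abs_of_nonneg (mul_nonneg (hpol0 si ai) (hpol0 sj aj))]
    have hsum : ∑ ai, ∑ aj, pol si ai * pol sj aj *
        (|V (g si ai) - V (g sj aj)| - Dpi (g si ai, g sj aj)) ≤ M := by
      have h1 : ∑ ai, ∑ aj, pol si ai * pol sj aj *
          (|V (g si ai) - V (g sj aj)| - Dpi (g si ai, g sj aj))
          ≤ ∑ ai, ∑ aj, pol si ai * pol sj aj * M := by
        refine Finset.sum_le_sum fun ai _ => Finset.sum_le_sum fun aj _ => ?_
        refine mul_le_mul_of_nonneg_left ?_ (mul_nonneg (hpol0 si ai) (hpol0 sj aj))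
        exact le_csSup hfbdd (Set.mem_range_self (g si ai, g sj aj))
      have h2 : ∑ ai, ∑ aj, pol si ai * pol sj aj * M = M := by
        have : ∀ ai, ∑ aj, pol si ai * pol sj aj * M = pol si ai * M := by
          intro ai
          rw [show (∑ aj, pol si ai * pol sj aj * M)
              = (pol si ai * M) * ∑ aj, pol sj aj from by
            rw [Finset.mul_sum]; exact Finset.sum_congr rfl fun aj _ => by ring,
            hpol1 sj, mul_one]
        rw [Finset.sum_congr rfl fun ai _ => this ai, ← Finset.sum_mul, hpol1 si, one_mul]
      linarith
    have expand : ∑ ai, ∑ aj, pol si ai * pol sj aj *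
        (|V (g si ai) - V (g sj aj)| - Dpi (g si ai, g sj aj))
        = (∑ ai, ∑ aj, pol si ai * pol sj aj * |V (g si ai) - V (g sj aj)|)
          - ∑ ai, ∑ aj, pol si ai * pol sj aj * Dpi (g si ai, g sj aj) := by
      simp only [mul_sub, Finset.sum_sub_distrib]
    have : f (si, sj) = |V si - V sj| - Dpi (si, sj) := rfl
    rw [this, hD]
    nlinarith [hsum, habs, expand]
  have hMle : M ≤ γ * M := csSup_le hfne (by rintro x ⟨p, rfl⟩; exact hle p)
  have hM0 : M ≤ 0 := by nlinarith
  intro si sj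
  have := le_csSup hfbdd (Set.mem_range_self (si, sj))
  have hfsij : f (si, sj) = |V si - V sj| - Dpi (si, sj) := rfl
  rw [hfsij] at this
  linarith
end
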